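/- Let (C, E, s) be an extriangulated category satisfying Condition (WIC). Suppose given a 3×3 diagram whose bottom two rows A → B → C --δ--> and A' → B' → C' --δ'--> are E-triangles, whose three columns K → A → A', K' → B → B', K'' → C → C' are E-triangles, and in which the two lower squares commute appropriately (forming morphisms of E-triangles in rows and columns). If the morphism y: B → C is a retraction (split epimorphism), then there exists an E-triangle K → K' → K'' --δ''--> completing the diagram so that all rows and columns are E-triangles and all squares commute compatibly, i.e., (k,k',k''), (a,b,c), (m,x,x'), (n',y,y') are morphisms of E-triangles. -/

import Mathlib

open CategoryTheory Limits

universe w v u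

/-- An extriangulated category structure on an additive category `𝒞`, in the sense of
Nakaoka–Palu: a biadditive `Ab`-valued functor `E` together with an additive realization,
encoded via the predicate `IsTriangle x y δ` meaning that `A ⟶x B ⟶y X` realizes
`δ ∈ E(X,A)`, satisfying (ET1)–(ET4) and their duals. -/
structure ExtriangulatedStructure (𝒞 : Type u) [Category.{v} 𝒞] [Preadditive 𝒞]
    [HasBinaryBiproducts 𝒞] where
  E : 𝒞 → 𝒞 → AddCommGrpCat.{w}
  pull : ∀ {X' X A : 𝒞}, (X' ⟶ X) → E X A → E X' A
  push : ∀ {X A A' : 𝒞}, (A ⟶ A') → E X A → E X A'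
  pull_id : ∀ {X A : 𝒞} (δ : E X A), pull (𝟙 X) δ = δ
  push_id : ∀ {X A : 𝒞} (δ : E X A), push (𝟙 A) δ = δ
  pull_comp : ∀ {X'' X' X A : 𝒞} (c' : X'' ⟶ X') (c : X' ⟶ X) (δ : E X A),
      pull (c' ≫ c) δ = pull c' (pull c δ)
  push_comp : ∀ {X A A' A'' : 𝒞} (a : A ⟶ A') (a' : A' ⟶ A'') (δ : E X A),
      push (a ≫ a') δ = push a' (push a δ)
  pull_push : ∀ {X' X A A' : 𝒞} (c : X' ⟶ X) (a : A ⟶ A') (δ : E X A),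
      pull c (push a δ) = push a (pull c δ)
  pull_add : ∀ {X' X A : 𝒞} (c : X' ⟶ X) (δ δ' : E X A),
      pull c (δ + δ') = pull c δ + pull c δ'
  push_add : ∀ {X A A' : 𝒞} (a : A ⟶ A') (δ δ' : E X A),
      push a (δ + δ') = push a δ + push a δ'
  add_pull : ∀ {X' X A : 𝒞} (c c' : X' ⟶ X) (δ : E X A),
      pull (c + c') δ = pull c δ + pull c' δ
  add_push : ∀ {X A A' : 𝒞} (a a' : A ⟶ A') (δ : E X A),
      push (a + a') δ = push a δ + push a' δ
  IsTriangle : ∀ {A B X : 𝒞}, (A ⟶ B) → (B ⟶ X) → E X A → Prop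
  realize_exists : ∀ {X A : 𝒞} (δ : E X A),
      ∃ (B : 𝒞) (x : A ⟶ B) (y : B ⟶ X), IsTriangle x y δ
  realize_zero : ∀ (A X : 𝒞),
      IsTriangle (biprod.inl : A ⟶ A ⊞ X) (biprod.snd : A ⊞ X ⟶ X) (0 : E X A)
  realize_sum : ∀ {A B X A' B' X' : 𝒞} (x : A ⟶ B) (y : B ⟶ X) (δ : E X A)
      (x' : A' ⟶ B') (y' : B' ⟶ X') (δ' : E X' A'),
      IsTriangle x y δ → IsTriangle x' y' δ' →
      IsTriangle (biprod.map x x') (biprod.map y y')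
        (push biprod.inl (pull biprod.fst δ) + push biprod.inr (pull biprod.snd δ'))
  realize_iso : ∀ {A B B' X : 𝒞} (x : A ⟶ B) (y : B ⟶ X) (δ : E X A) (b : B ≅ B'),
      IsTriangle x y δ → IsTriangle (x ≫ b.hom) (b.inv ≫ y) δ
  realize_mor : ∀ {A B X A' B' X' : 𝒞} {x : A ⟶ B} {y : B ⟶ X} {δ : E X A}
      {x' : A' ⟶ B'} {y' : B' ⟶ X'} {δ' : E X' A'} (a : A ⟶ A') (c : X ⟶ X'),
      IsTriangle x y δ → IsTriangle x' y' δ' → push a δ = pull c δ' →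
      ∃ b : B ⟶ B', x ≫ b = a ≫ x' ∧ y ≫ c = b ≫ y'
  ET3 : ∀ {A B X A' B' X' : 𝒞} {x : A ⟶ B} {y : B ⟶ X} {δ : E X A}
      {x' : A' ⟶ B'} {y' : B' ⟶ X'} {δ' : E X' A'} (a : A ⟶ A') (b : B ⟶ B'),
      IsTriangle x y δ → IsTriangle x' y' δ' → x ≫ b = a ≫ x' →
      ∃ c : X ⟶ X', push a δ = pull c δ' ∧ y ≫ c = b ≫ y'
  ET3op : ∀ {A B X A' B' X' : 𝒞} {x : A ⟶ B} {y : B ⟶ X} {δ : E X A}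
      {x' : A' ⟶ B'} {y' : B' ⟶ X'} {δ' : E X' A'} (b : B ⟶ B') (c : X ⟶ X'),
      IsTriangle x y δ → IsTriangle x' y' δ' → y ≫ c = b ≫ y' →
      ∃ a : A ⟶ A', push a δ = pull c δ' ∧ x ≫ b = a ≫ x'
  ET4 : ∀ {A B D Cv F : 𝒞} (f : A ⟶ B) (f' : B ⟶ D) (δ : E D A)
      (g : B ⟶ Cv) (g' : Cv ⟶ F) (δ' : E F B),
      IsTriangle f f' δ → IsTriangle g g' δ' →
      ∃ (E₀ : 𝒞) (h : A ⟶ Cv) (h' : Cv ⟶ E₀) (d : D ⟶ E₀) (e : E₀ ⟶ F) (δ'' : E E₀ A),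
        IsTriangle h h' δ'' ∧ IsTriangle d e (push f' δ') ∧
        h = f ≫ g ∧ f' ≫ d = g ≫ h' ∧ g' = h' ≫ e ∧
        pull d δ'' = δ ∧ push f δ'' = pull e δ'
  ET4op : ∀ {D B A F Cv : 𝒞} (i : D ⟶ B) (p : B ⟶ A) (δ : E A D)
      (j : F ⟶ Cv) (q : Cv ⟶ B) (δ' : E B F),
      IsTriangle i p δ → IsTriangle j q δ' →
      ∃ (E₀ : 𝒞) (i' : E₀ ⟶ Cv) (p' : Cv ⟶ A) (m : F ⟶ E₀) (n : E₀ ⟶ D) (δ'' : E A E₀),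
        IsTriangle i' p' δ'' ∧ IsTriangle m n (pull i δ') ∧
        p' = q ≫ p ∧ i' ≫ q = n ≫ i ∧ j = m ≫ i' ∧
        push n δ'' = δ ∧ pull p δ'' = push m δ'

namespace ExtriangulatedStructure

variable {𝒞 : Type u} [Category.{v} 𝒞] [Preadditive 𝒞] [HasBinaryBiproducts 𝒞]
variable (S : ExtriangulatedStructure.{w} 𝒞)

/-- A morphism is an inflation if it occurs as the first map of some `E`-triangle. -/
def IsInflation {A B : 𝒞} (f : A ⟶ B) : Prop :=
  ∃ (X : 𝒞) (g : B ⟶ X) (δ : S.E X A), S.IsTriangle f g δ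

/-- A morphism is a deflation if it occurs as the second map of some `E`-triangle. -/
def IsDeflation {B X : 𝒞} (g : B ⟶ X) : Prop :=
  ∃ (A : 𝒞) (f : A ⟶ B) (δ : S.E X A), S.IsTriangle f g δ

/-- Condition (WIC). -/
def WIC : Prop :=
  (∀ {A B X : 𝒞} (f : A ⟶ B) (g : B ⟶ X), S.IsInflation (f ≫ g) → S.IsInflation f) ∧
  (∀ {A B X : 𝒞} (f : A ⟶ B) (g : B ⟶ X), S.IsDeflation (f ≫ g) → S.IsDeflation g)

/-- `(a, b, c)` is a morphism of `E`-triangles. -/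
def IsTriangleMor {A B X A' B' X' : 𝒞} (x : A ⟶ B) (y : B ⟶ X) (δ : S.E X A)
    (x' : A' ⟶ B') (y' : B' ⟶ X') (δ' : S.E X' A')
    (a : A ⟶ A') (b : B ⟶ B') (c : X ⟶ X') : Prop :=
  x ≫ b = a ≫ x' ∧ y ≫ c = b ≫ y' ∧ S.push a δ = S.pull c δ'

/-- A cotorsion pair `(𝒬, ℛ)`: `E(𝒬, ℛ) = 0` and every object admits the two
approximation `E`-triangles. -/
def CotorsionPair (𝒬 ℛ : Set 𝒞) : Prop :=
  (∀ (Q R : 𝒞), Q ∈ 𝒬 → R ∈ ℛ → ∀ δ : S.E Q R, δ = 0) ∧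
  (∀ X : 𝒞, ∃ (R Q : 𝒞) (f : R ⟶ Q) (g : Q ⟶ X) (δ : S.E X R),
      S.IsTriangle f g δ ∧ Q ∈ 𝒬 ∧ R ∈ ℛ) ∧
  (∀ X : 𝒞, ∃ (R Q : 𝒞) (f : X ⟶ R) (g : R ⟶ Q) (δ : S.E Q X),
      S.IsTriangle f g δ ∧ Q ∈ 𝒬 ∧ R ∈ ℛ)

/-- A cotorsion pair is hereditary if `𝒬` is closed under cocones of deflations and
`ℛ` is closed under cones of inflations. -/
def Hereditary (𝒬 ℛ : Set 𝒞) : Prop :=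
  (∀ {A B X : 𝒞} (f : A ⟶ B) (g : B ⟶ X) (δ : S.E X A),
      S.IsTriangle f g δ → B ∈ 𝒬 → X ∈ 𝒬 → A ∈ 𝒬) ∧
  (∀ {A B X : 𝒞} (f : A ⟶ B) (g : B ⟶ X) (δ : S.E X A),
      S.IsTriangle f g δ → A ∈ ℛ → B ∈ ℛ → X ∈ ℛ)

/-- A class of objects is thick: closed under direct summands and satisfying the
2-out-of-3 property on `E`-triangles. -/
def Thick (𝒲 : Set 𝒞) : Prop :=
  (∀ {X Y : 𝒞}, Y ∈ 𝒲 → (∃ (i : X ⟶ Y) (p : Y ⟶ X), i ≫ p = 𝟙 X) → X ∈ 𝒲) ∧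
  (∀ {A B X : 𝒞} (f : A ⟶ B) (g : B ⟶ X) (δ : S.E X A), S.IsTriangle f g δ →
    (A ∈ 𝒲 → B ∈ 𝒲 → X ∈ 𝒲) ∧ (A ∈ 𝒲 → X ∈ 𝒲 → B ∈ 𝒲) ∧ (B ∈ 𝒲 → X ∈ 𝒲 → A ∈ 𝒲))

/-- `(𝒬, 𝒲, ℛ)` is a Hovey triple. -/
def HoveyTriple (𝒬 𝒲 ℛ : Set 𝒞) : Prop :=
  S.Thick 𝒲 ∧ S.CotorsionPair 𝒬 (𝒲 ∩ ℛ) ∧ S.CotorsionPair (𝒬 ∩ 𝒲) ℛ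

end ExtriangulatedStructure
namespace ExtriangulatedStructure

variable {𝒞 : Type u} [Category.{v} 𝒞] [Preadditive 𝒞] [HasBinaryBiproducts 𝒞]
variable (S : ExtriangulatedStructure.{w} 𝒞)

lemma pull_elem_zero {X' X A : 𝒞} (c : X' ⟶ X) : S.pull c (0 : S.E X A) = 0 := by
  have h := S.pull_add c (0 : S.E X A) 0
  rw [add_zero] at h
  exact left_eq_add.mp h

lemma push_elem_zero {X A A' : 𝒞} (a : A ⟶ A') : S.push a (0 : S.E X A) = 0 := by
  have h := S.push_add a (0 : S.E X A) 0
  rw [add_zero] at h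
  exact left_eq_add.mp h

lemma pull_hom_zero {X' X A : 𝒞} (δ : S.E X A) : S.pull (0 : X' ⟶ X) δ = 0 := by
  have h := S.add_pull (0 : X' ⟶ X) 0 δ
  rw [add_zero] at h
  exact left_eq_add.mp h

lemma pull_hom_neg {X' X A : 𝒞} (c : X' ⟶ X) (δ : S.E X A) :
    S.pull (-c) δ = - S.pull c δ := by
  have h := S.add_pull c (-c) δ
  have h2 : c + -c = 0 := by abel
  rw [h2, S.pull_hom_zero] at h
  exact eq_neg_of_add_eq_zero_left (by rw [add_comm] at h; exact h.symm)

lemma pull_hom_sub {X' X A : 𝒞} (c c' : X' ⟶ X) (δ : S.E X A) :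
    S.pull (c - c') δ = S.pull c δ - S.pull c' δ := by
  rw [sub_eq_add_neg, S.add_pull, S.pull_hom_neg, sub_eq_add_neg]

/-- In any E-triangle the two maps compose to zero. -/
lemma tri_comp_zero {A B X : 𝒞} {x : A ⟶ B} {y : B ⟶ X} {δ : S.E X A}
    (h : S.IsTriangle x y δ) : x ≫ y = 0 := by
  obtain ⟨c, _, hc2⟩ := S.ET3 (𝟙 A) (biprod.desc x (𝟙 B)) (S.realize_zero A B) h (by simp)
  have h2 : (biprod.inl : A ⟶ A ⊞ B) ≫ (biprod.snd ≫ c) =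
      biprod.inl ≫ (biprod.desc x (𝟙 B) ≫ y) := by rw [hc2]
  simpa using h2.symm

/-- An E-triangle pulled back along its own deflation vanishes. -/
lemma tri_pull_self {A B X : 𝒞} {x : A ⟶ B} {y : B ⟶ X} {δ : S.E X A}
    (h : S.IsTriangle x y δ) : S.pull y δ = 0 := by
  obtain ⟨c, hc1, hc2⟩ := S.ET3 (𝟙 A) (biprod.desc x (𝟙 B)) (S.realize_zero A B) h (by simp)
  have hcy : c = y := by
    have h2 : (biprod.inr : B ⟶ A ⊞ B) ≫ (biprod.snd ≫ c) =
        biprod.inr ≫ (biprod.desc x (𝟙 B) ≫ y) := by rw [hc2]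
    simpa using h2
  rw [← hcy, ← hc1, S.push_id]

/-- Weak kernel property. -/
lemma factor_through_first {A B X T : 𝒞} {x : A ⟶ B} {y : B ⟶ X} {δ : S.E X A}
    (h : S.IsTriangle x y δ) (f : T ⟶ B) (hf : f ≫ y = 0) :
    ∃ g : T ⟶ A, g ≫ x = f := by
  obtain ⟨g, _, hg⟩ := S.ET3op (biprod.desc f 0) (0 : T ⟶ X) (S.realize_zero T T) h
    (by apply biprod.hom_ext' <;> simp [hf])
  exact ⟨g, by simpa using hg.symm⟩

/-- Weak cokernel property. -/
lemma factor_through_third {A B X T : 𝒞} {x : A ⟶ B} {y : B ⟶ X} {δ : S.E X A}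
    (h : S.IsTriangle x y δ) (f : B ⟶ T) (hf : x ≫ f = 0) :
    ∃ g : X ⟶ T, y ≫ g = f := by
  obtain ⟨g, _, hg⟩ := S.ET3 x (biprod.lift (𝟙 B) f) h (S.realize_zero B T)
    (by apply biprod.hom_ext <;> simp [hf])
  exact ⟨g, by simpa using hg⟩

/-- A morphism out of the base killed by push factors through the inflation. -/
lemma factor_of_push_zero {A B X T : 𝒞} {x : A ⟶ B} {y : B ⟶ X} {δ : S.E X A}
    (h : S.IsTriangle x y δ) (f : A ⟶ T) (hf : S.push f δ = 0) :
    ∃ g : B ⟶ T, x ≫ g = f := by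
  obtain ⟨b, hb1, _⟩ := S.realize_mor f (𝟙 X) h (S.realize_zero T X)
    (by rw [hf, S.pull_id])
  refine ⟨b ≫ biprod.fst, ?_⟩
  rw [← Category.assoc, hb1]; simp

/-- An endomorphism of the middle object compatible with the triangle is invertible. -/
lemma mid_endo_inv {A B X : 𝒞} {x : A ⟶ B} {y : B ⟶ X} {δ : S.E X A}
    (h : S.IsTriangle x y δ) (u : B ⟶ B) (h1 : x ≫ u = x) (h2 : u ≫ y = y) :
    ∃ u' : B ⟶ B, u ≫ u' = 𝟙 B ∧ u' ≫ u = 𝟙 B := by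
  have hx : x ≫ (𝟙 B - u) = 0 := by
    rw [Preadditive.comp_sub, Category.comp_id, h1, sub_self]
  obtain ⟨g, hg⟩ := S.factor_through_third h (𝟙 B - u) hx
  have hy0 : (𝟙 B - u) ≫ y = 0 := by
    rw [Preadditive.sub_comp, Category.id_comp, h2, sub_self]
  have hvv : (𝟙 B - u) ≫ (𝟙 B - u) = 0 := by
    calc (𝟙 B - u) ≫ (𝟙 B - u) = (𝟙 B - u) ≫ (y ≫ g) := by rw [hg]
    _ = ((𝟙 B - u) ≫ y) ≫ g := by rw [Category.assoc]
    _ = 0 := by rw [hy0, Limits.zero_comp]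
  have hvv' : (𝟙 B - u) - (u - u ≫ u) = 0 := by
    rw [← hvv, Preadditive.sub_comp, Preadditive.comp_sub, Preadditive.comp_sub,
      Category.id_comp, Category.id_comp, Category.comp_id]
  have h5 : 𝟙 B - u = u - u ≫ u := sub_eq_zero.mp hvv'
  refine ⟨𝟙 B + (𝟙 B - u), ?_, ?_⟩
  · rw [Preadditive.comp_add, Category.comp_id, Preadditive.comp_sub, Category.comp_id,
      ← h5]
    abel
  · rw [Preadditive.add_comp, Category.id_comp, Preadditive.sub_comp, Category.id_comp,
      ← h5]
    abel

/-- An endomorphism of the base object compatible with the triangle is invertible. -/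
lemma left_endo_inv {A B X : 𝒞} {x : A ⟶ B} {y : B ⟶ X} {δ : S.E X A}
    (h : S.IsTriangle x y δ) (u : A ⟶ A) (h1 : u ≫ x = x) (h2 : S.push u δ = δ) :
    ∃ u' : A ⟶ A, u ≫ u' = 𝟙 A ∧ u' ≫ u = 𝟙 A := by
  have hv : S.push (𝟙 A - u) δ = 0 := by
    have h5 := S.add_push u (𝟙 A - u) δ
    have h6 : u + (𝟙 A - u) = 𝟙 A := by abel
    rw [h6, S.push_id, h2] at h5
    exact (left_eq_add.mp h5)
  obtain ⟨g, hg⟩ := S.factor_of_push_zero h (𝟙 A - u) hv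
  have hx0 : (𝟙 A - u) ≫ x = 0 := by
    rw [Preadditive.sub_comp, Category.id_comp, h1, sub_self]
  have hvv : (𝟙 A - u) ≫ (𝟙 A - u) = 0 := by
    calc (𝟙 A - u) ≫ (𝟙 A - u) = (𝟙 A - u) ≫ (x ≫ g) := by rw [hg]
    _ = ((𝟙 A - u) ≫ x) ≫ g := by rw [Category.assoc]
    _ = 0 := by rw [hx0, Limits.zero_comp]
  have hvv' : (𝟙 A - u) - (u - u ≫ u) = 0 := by
    rw [← hvv, Preadditive.sub_comp, Preadditive.comp_sub, Preadditive.comp_sub,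
      Category.id_comp, Category.id_comp, Category.comp_id]
  have h5 : 𝟙 A - u = u - u ≫ u := sub_eq_zero.mp hvv'
  refine ⟨𝟙 A + (𝟙 A - u), ?_, ?_⟩
  · rw [Preadditive.comp_add, Category.comp_id, Preadditive.comp_sub, Category.comp_id,
      ← h5]
    abel
  · rw [Preadditive.add_comp, Category.id_comp, Preadditive.sub_comp, Category.id_comp,
      ← h5]
    abel
/-- Two cocones (kernel triangles) of the same deflation are isomorphic compatibly. -/
lemma cocone_uniq {E0 E1 B C : 𝒞} {i0 : E0 ⟶ B} {i1 : E1 ⟶ B} {p : B ⟶ C}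
    {δ0 : S.E C E0} {δ1 : S.E C E1}
    (h0 : S.IsTriangle i0 p δ0) (h1 : S.IsTriangle i1 p δ1) :
    ∃ (e : E0 ⟶ E1) (e' : E1 ⟶ E0), e ≫ i1 = i0 ∧ S.push e δ0 = δ1 ∧
      e ≫ e' = 𝟙 E0 ∧ e' ≫ e = 𝟙 E1 := by
  obtain ⟨e, he1, he2⟩ := S.ET3op (𝟙 B) (𝟙 C) h0 h1 (by simp)
  obtain ⟨f, hf1, hf2⟩ := S.ET3op (𝟙 B) (𝟙 C) h1 h0 (by simp)
  rw [S.pull_id] at he1 hf1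
  have he2' : e ≫ i1 = i0 := by simpa using he2.symm
  have hf2' : f ≫ i0 = i1 := by simpa using hf2.symm
  obtain ⟨w, hw1, hw2⟩ := S.left_endo_inv h0 (e ≫ f)
    (by rw [Category.assoc, hf2', he2'])
    (by rw [S.push_comp, he1, hf1])
  obtain ⟨v, hv1, hv2⟩ := S.left_endo_inv h1 (f ≫ e)
    (by rw [Category.assoc, he2', hf2'])
    (by rw [S.push_comp, hf1, he1])
  have hre : e ≫ (f ≫ w) = 𝟙 E0 := by rw [← Category.assoc]; exact hw1
  have hle : (v ≫ f) ≫ e = 𝟙 E1 := by rw [Category.assoc]; exact hv2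
  have heq : f ≫ w = v ≫ f := by
    calc f ≫ w = ((v ≫ f) ≫ e) ≫ (f ≫ w) := by rw [hle, Category.id_comp]
    _ = (v ≫ f) ≫ (e ≫ (f ≫ w)) := by simp only [Category.assoc]
    _ = v ≫ f := by rw [hre, Category.comp_id]
  exact ⟨e, f ≫ w, he2', he1, hre, by rw [heq]; exact hle⟩

/-- Splitting data for a triangle with vanishing class. -/
lemma split_struct {A E C : 𝒞} {m : A ⟶ E} {n : E ⟶ C}
    (h : S.IsTriangle m n (0 : S.E C A)) :
    ∃ (r : E ⟶ A) (t : C ⟶ E), m ≫ r = 𝟙 A ∧ t ≫ n = 𝟙 C ∧ t ≫ r = 0 ∧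
      r ≫ m + n ≫ t = 𝟙 E := by
  obtain ⟨u, hu1, hu2⟩ := S.realize_mor (𝟙 A) (𝟙 C) (S.realize_zero A C) h
    (by rw [S.push_id, S.pull_id])
  obtain ⟨v, hv1, hv2⟩ := S.realize_mor (𝟙 A) (𝟙 C) h (S.realize_zero A C)
    (by rw [S.push_id, S.pull_id])
  rw [Category.id_comp] at hu1 hv1
  rw [Category.comp_id] at hu2 hv2
  -- hu1 : inl ≫ u = m ; hu2 : snd = u ≫ n ; hv1 : m ≫ v = inl ; hv2 : n = v ≫ snd
  obtain ⟨w, hw1, hw2⟩ := S.mid_endo_inv (S.realize_zero A C) (u ≫ v)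
    (by rw [← Category.assoc, hu1, hv1])
    (by rw [Category.assoc, ← hv2, ← hu2])
  obtain ⟨z, hz1, hz2⟩ := S.mid_endo_inv h (v ≫ u)
    (by rw [← Category.assoc, hv1, hu1])
    (by rw [Category.assoc, ← hu2, ← hv2])
  have hre : u ≫ (v ≫ w) = 𝟙 _ := by rw [← Category.assoc]; exact hw1
  have hle : (z ≫ v) ≫ u = 𝟙 _ := by rw [Category.assoc]; exact hz2
  have heq : v ≫ w = z ≫ v := by
    calc v ≫ w = ((z ≫ v) ≫ u) ≫ (v ≫ w) := by rw [hle, Category.id_comp]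
    _ = (z ≫ v) ≫ (u ≫ (v ≫ w)) := by simp only [Category.assoc]
    _ = z ≫ v := by rw [hre, Category.comp_id]
  have hle' : (v ≫ w) ≫ u = 𝟙 _ := by rw [heq]; exact hle
  have hn : (v ≫ w) ≫ biprod.snd = n := by
    rw [hu2, ← Category.assoc, hle', Category.id_comp]
  refine ⟨(v ≫ w) ≫ biprod.fst, biprod.inr ≫ u, ?_, ?_, ?_, ?_⟩
  · calc m ≫ ((v ≫ w) ≫ biprod.fst)
        = (biprod.inl ≫ (u ≫ (v ≫ w))) ≫ biprod.fst := by
          rw [← hu1]; simp only [Category.assoc]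
    _ = 𝟙 A := by rw [hre]; simp
  · rw [Category.assoc, ← hu2]; simp
  · calc (biprod.inr ≫ u) ≫ ((v ≫ w) ≫ biprod.fst)
        = (biprod.inr ≫ (u ≫ (v ≫ w))) ≫ biprod.fst := by simp only [Category.assoc]
    _ = 0 := by rw [hre]; simp
  · calc ((v ≫ w) ≫ biprod.fst) ≫ m + n ≫ (biprod.inr ≫ u)
        = ((v ≫ w) ≫ biprod.fst) ≫ (biprod.inl ≫ u)
            + ((v ≫ w) ≫ biprod.snd) ≫ (biprod.inr ≫ u) := by rw [← hu1, hn]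
    _ = (v ≫ w) ≫ ((biprod.fst ≫ biprod.inl + biprod.snd ≫ biprod.inr) ≫ u) := by
          rw [Preadditive.add_comp, Preadditive.comp_add]; simp only [Category.assoc]
    _ = (v ≫ w) ≫ u := by rw [biprod.total, Category.id_comp]
    _ = 𝟙 E := hle'
/-- Twist the third object of a triangle by an isomorphism. -/
lemma twist_right {A B C C' : 𝒞} {x : A ⟶ B} {y : B ⟶ C} {δ : S.E C A}
    (h : S.IsTriangle x y δ) (φ : C ⟶ C') (φ' : C' ⟶ C)
    (hφ : φ ≫ φ' = 𝟙 C) (hφ' : φ' ≫ φ = 𝟙 C') :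
    S.IsTriangle x (y ≫ φ) (S.pull φ' δ) := by
  obtain ⟨B₂, x₂, y₂, h₂⟩ := S.realize_exists (S.pull φ' δ)
  obtain ⟨b, hb1, hb2⟩ := S.realize_mor (𝟙 A) φ h h₂
    (by rw [S.push_id, ← S.pull_comp, hφ, S.pull_id])
  obtain ⟨b', hb1', hb2'⟩ := S.realize_mor (𝟙 A) φ' h₂ h (by rw [S.push_id])
  rw [Category.id_comp] at hb1 hb1'
  obtain ⟨w, hw1, hw2⟩ := S.mid_endo_inv h (b ≫ b')
    (by rw [← Category.assoc, hb1, hb1'])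
    (by rw [Category.assoc, ← hb2', ← Category.assoc, ← hb2, Category.assoc, hφ,
      Category.comp_id])
  obtain ⟨z, hz1, hz2⟩ := S.mid_endo_inv h₂ (b' ≫ b)
    (by rw [← Category.assoc, hb1', hb1])
    (by rw [Category.assoc, ← hb2, ← Category.assoc, ← hb2', Category.assoc, hφ',
      Category.comp_id])
  have hre : b' ≫ (b ≫ z) = 𝟙 B₂ := by rw [← Category.assoc]; exact hz1
  have hle : (w ≫ b) ≫ b' = 𝟙 B := by rw [Category.assoc]; exact hw2
  have heq : b ≫ z = w ≫ b := by
    calc b ≫ z = ((w ≫ b) ≫ b') ≫ (b ≫ z) := by rw [hle, Category.id_comp]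
    _ = (w ≫ b) ≫ (b' ≫ (b ≫ z)) := by simp only [Category.assoc]
    _ = w ≫ b := by rw [hre, Category.comp_id]
  have hle' : (b ≫ z) ≫ b' = 𝟙 B := by rw [heq]; exact hle
  have := S.realize_iso x₂ y₂ (S.pull φ' δ) (Iso.mk b' (b ≫ z) hre hle') h₂
  have e1 : x₂ ≫ b' = x := hb1'
  have e2 : (b ≫ z) ≫ y₂ = y ≫ φ := by
    have hy₂ : b' ≫ (y ≫ φ) = y₂ := by
      rw [← Category.assoc, ← hb2', Category.assoc, hφ', Category.comp_id]
    rw [← hy₂, ← Category.assoc, hle', Category.id_comp]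
  simpa [e1, e2] using this

/-- Twist the first object of a triangle by an isomorphism. -/
lemma twist_left {A A₀ B C : 𝒞} {x : A ⟶ B} {y : B ⟶ C} {δ : S.E C A}
    (h : S.IsTriangle x y δ) (φ : A₀ ⟶ A) (φ' : A ⟶ A₀)
    (hφ : φ ≫ φ' = 𝟙 A₀) (hφ' : φ' ≫ φ = 𝟙 A) :
    S.IsTriangle (φ ≫ x) y (S.push φ' δ) := by
  obtain ⟨B₂, x₂, y₂, h₂⟩ := S.realize_exists (S.push φ' δ)
  obtain ⟨b, hb1, hb2⟩ := S.realize_mor φ' (𝟙 C) h h₂ (by rw [S.pull_id])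
  obtain ⟨b', hb1', hb2'⟩ := S.realize_mor φ (𝟙 C) h₂ h
    (by rw [← S.push_comp, hφ', S.push_id, S.pull_id])
  rw [Category.comp_id] at hb2 hb2'
  obtain ⟨w, hw1, hw2⟩ := S.mid_endo_inv h (b ≫ b')
    (by rw [← Category.assoc, hb1, Category.assoc, hb1', ← Category.assoc, hφ',
      Category.id_comp])
    (by rw [Category.assoc, ← hb2', ← hb2])
  obtain ⟨z, hz1, hz2⟩ := S.mid_endo_inv h₂ (b' ≫ b)
    (by rw [← Category.assoc, hb1', Category.assoc, hb1, ← Category.assoc, hφ,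
      Category.id_comp])
    (by rw [Category.assoc, ← hb2, ← hb2'])
  have hre : b' ≫ (b ≫ z) = 𝟙 B₂ := by rw [← Category.assoc]; exact hz1
  have hle : (w ≫ b) ≫ b' = 𝟙 B := by rw [Category.assoc]; exact hw2
  have heq : b ≫ z = w ≫ b := by
    calc b ≫ z = ((w ≫ b) ≫ b') ≫ (b ≫ z) := by rw [hle, Category.id_comp]
    _ = (w ≫ b) ≫ (b' ≫ (b ≫ z)) := by simp only [Category.assoc]
    _ = w ≫ b := by rw [hre, Category.comp_id]
  have hle' : (b ≫ z) ≫ b' = 𝟙 B := by rw [heq]; exact hle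
  have := S.realize_iso x₂ y₂ (S.push φ' δ) (Iso.mk b' (b ≫ z) hre hle') h₂
  have e1 : x₂ ≫ b' = φ ≫ x := hb1'
  have e2 : (b ≫ z) ≫ y₂ = y := by
    have hy₂ : b' ≫ y = y₂ := hb2'.symm
    rw [← hy₂, ← Category.assoc, hle', Category.id_comp]
  simpa [e1, e2] using this

/-- Sign twist of a triangle. -/
lemma twist_neg {A B C : 𝒞} {x : A ⟶ B} {y : B ⟶ C} {δ : S.E C A}
    (h : S.IsTriangle x y δ) : S.IsTriangle x (-y) (-δ) := by
  have := S.twist_right h (-𝟙 C) (-𝟙 C) (by simp) (by simp)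
  simpa [S.pull_hom_neg, S.pull_id] using this
/-- The split triangle with the summands swapped. -/
lemma realize_zero' (B Z : 𝒞) :
    S.IsTriangle (biprod.inr : B ⟶ Z ⊞ B) biprod.fst (0 : S.E Z B) := by
  have h0 := S.realize_iso _ _ _
    (Iso.mk (biprod.lift biprod.snd biprod.fst : B ⊞ Z ⟶ Z ⊞ B)
      (biprod.lift biprod.snd biprod.fst)
      (by apply biprod.hom_ext <;> simp) (by apply biprod.hom_ext <;> simp))
    (S.realize_zero B Z)
  have e1 : (biprod.inl : B ⟶ B ⊞ Z) ≫ biprod.lift biprod.snd biprod.fst =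
      biprod.inr := by apply biprod.hom_ext <;> simp
  have e2 : (biprod.lift biprod.snd biprod.fst : Z ⊞ B ⟶ B ⊞ Z) ≫ biprod.snd =
      biprod.fst := by simp
  simpa [e1, e2] using h0

/-- Padding a triangle by a biproduct summand (identity on the left). -/
lemma pad_triangle {A B C : 𝒞} {f : A ⟶ B} {g : B ⟶ C} {δ : S.E C A}
    (h : S.IsTriangle f g δ) (Z : 𝒞) :
    ∃ δp : S.E (Z ⊞ C) A,
      S.IsTriangle (f ≫ biprod.inr) (biprod.map (𝟙 Z) g) δp ∧
      S.pull biprod.inr δp = δ ∧ S.pull biprod.inl δp = 0 := by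
  obtain ⟨V, h0, h', d, e, δV, T1, T2, hh, hrel1, hrel2, hδ1, hδ2⟩ :=
    S.ET4 f g δ (biprod.inr : B ⟶ Z ⊞ B) biprod.fst 0 h (S.realize_zero' B Z)
  rw [hh] at T1
  rw [S.push_elem_zero] at T2
  obtain ⟨rV, tV, h_r, h_t, h_tr, h_tot⟩ := S.split_struct T2
  have hde : d ≫ e = 0 := S.tri_comp_zero T2
  have hfst : (biprod.inl ≫ h') ≫ e = 𝟙 Z := by
    rw [Category.assoc, ← hrel2]; simp
  have hg : (biprod.inr ≫ h') ≫ rV = g := by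
    rw [← hrel1, Category.assoc, h_r, Category.comp_id]
  set ω : Z ⟶ C := (biprod.inl ≫ h') ≫ rV with hω
  have A1 : (tV + ω ≫ d) ≫ e = 𝟙 Z := by
    rw [Preadditive.add_comp, h_t, Category.assoc, hde, Limits.comp_zero, add_zero]
  have A2 : (tV + ω ≫ d) ≫ (rV - e ≫ ω) = 0 := by
    rw [Preadditive.comp_sub, Preadditive.add_comp, Preadditive.add_comp, h_tr,
      Category.assoc, h_r, Category.comp_id, ← Category.assoc tV e ω, h_t,
      Category.id_comp, Category.assoc, ← Category.assoc d e ω, hde,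
      Limits.zero_comp, Limits.comp_zero]
    abel
  have A4 : d ≫ (rV - e ≫ ω) = 𝟙 C := by
    rw [Preadditive.comp_sub, h_r, ← Category.assoc, hde, Limits.zero_comp, sub_zero]
  have hΦ1 : biprod.lift e (rV - e ≫ ω) ≫ biprod.desc (tV + ω ≫ d) d = 𝟙 V := by
    rw [biprod.lift_desc, Preadditive.comp_add, Preadditive.sub_comp]
    simp only [Category.assoc]
    rw [← h_tot]; abel
  have hΦ2 : biprod.desc (tV + ω ≫ d) d ≫ biprod.lift e (rV - e ≫ ω) = 𝟙 (Z ⊞ C) := by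
    apply biprod.hom_ext'
    · rw [← Category.assoc, biprod.inl_desc, Category.comp_id]
      apply biprod.hom_ext
      · rw [Category.assoc, biprod.lift_fst, biprod.inl_fst]; exact A1
      · rw [Category.assoc, biprod.lift_snd, biprod.inl_snd]; exact A2
    · rw [← Category.assoc, biprod.inr_desc, Category.comp_id]
      apply biprod.hom_ext
      · rw [Category.assoc, biprod.lift_fst, biprod.inr_fst]; exact hde
      · rw [Category.assoc, biprod.lift_snd, biprod.inr_snd]; exact A4
  have hmap : h' ≫ biprod.lift e (rV - e ≫ ω) = biprod.map (𝟙 Z) g := by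
    apply biprod.hom_ext
    · rw [Category.assoc, biprod.lift_fst, biprod.map_fst, ← hrel2, Category.comp_id]
    · rw [Category.assoc, biprod.lift_snd, biprod.map_snd]
      apply biprod.hom_ext'
      · simp only [Preadditive.comp_sub, ← Category.assoc]
        rw [hfst, Category.id_comp, ← hω]
        simp
      · simp only [Preadditive.comp_sub, ← Category.assoc]
        rw [hg]
        have he2 : (biprod.inr ≫ h') ≫ e = 0 := by
          rw [Category.assoc, ← hrel2]; simp
        rw [he2, Limits.zero_comp]
        simp
  have final := S.twist_right T1 (biprod.lift e (rV - e ≫ ω))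
    (biprod.desc (tV + ω ≫ d) d) hΦ1 hΦ2
  rw [hmap] at final
  refine ⟨S.pull (biprod.desc (tV + ω ≫ d) d) δV, final, ?_, ?_⟩
  · rw [← S.pull_comp, biprod.inr_desc, hδ1]
  · have hdecomp : tV = biprod.inl ≫ h' - ω ≫ d := by
      have h9 : biprod.inl ≫ h' = ω ≫ d + tV := by
        conv_lhs => rw [← Category.comp_id (biprod.inl ≫ h'), ← h_tot]
        rw [Preadditive.comp_add, ← Category.assoc, ← Category.assoc, hfst,
          Category.id_comp]
      rw [h9]; abel
    rw [← S.pull_comp, biprod.inl_desc, S.add_pull, S.pull_comp ω d, hδ1,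
      hdecomp, S.pull_hom_sub, S.pull_comp ω d, hδ1,
      S.pull_comp biprod.inl h', S.tri_pull_self T1, S.pull_elem_zero]
    abel
/-- Padding a triangle by a biproduct summand (identity on the right). -/
lemma pad_triangle' {A B C : 𝒞} {f : A ⟶ B} {g : B ⟶ C} {δ : S.E C A}
    (h : S.IsTriangle f g δ) (Z : 𝒞) :
    ∃ δp : S.E (C ⊞ Z) A,
      S.IsTriangle (f ≫ biprod.inl) (biprod.map g (𝟙 Z)) δp ∧
      S.pull biprod.inl δp = δ ∧ S.pull biprod.inr δp = 0 := by
  obtain ⟨δ0, T0, hp1, hp2⟩ := S.pad_triangle h Z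
  have hbr1 : ((biprod.lift biprod.snd biprod.fst : Z ⊞ B ⟶ B ⊞ Z) ≫
      biprod.lift biprod.snd biprod.fst) = 𝟙 (Z ⊞ B) := by
    apply biprod.hom_ext <;> simp
  have hbr1' : ((biprod.lift biprod.snd biprod.fst : B ⊞ Z ⟶ Z ⊞ B) ≫
      biprod.lift biprod.snd biprod.fst) = 𝟙 (B ⊞ Z) := by
    apply biprod.hom_ext <;> simp
  have hbr2 : ((biprod.lift biprod.snd biprod.fst : Z ⊞ C ⟶ C ⊞ Z) ≫
      biprod.lift biprod.snd biprod.fst) = 𝟙 (Z ⊞ C) := by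
    apply biprod.hom_ext <;> simp
  have hbr2' : ((biprod.lift biprod.snd biprod.fst : C ⊞ Z ⟶ Z ⊞ C) ≫
      biprod.lift biprod.snd biprod.fst) = 𝟙 (C ⊞ Z) := by
    apply biprod.hom_ext <;> simp
  have step1 := S.realize_iso _ _ _
    (Iso.mk (biprod.lift biprod.snd biprod.fst : Z ⊞ B ⟶ B ⊞ Z)
      (biprod.lift biprod.snd biprod.fst) hbr1 hbr1') T0
  have step2 := S.twist_right step1
    (biprod.lift biprod.snd biprod.fst : Z ⊞ C ⟶ C ⊞ Z)
    (biprod.lift biprod.snd biprod.fst) hbr2 hbr2'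
  have e1 : (f ≫ biprod.inr) ≫ (biprod.lift biprod.snd biprod.fst : Z ⊞ B ⟶ B ⊞ Z) =
      f ≫ biprod.inl := by
    rw [Category.assoc]; congr 1; apply biprod.hom_ext <;> simp
  have e2 : ((biprod.lift biprod.snd biprod.fst : B ⊞ Z ⟶ Z ⊞ B) ≫
      biprod.map (𝟙 Z) g) ≫ (biprod.lift biprod.snd biprod.fst : Z ⊞ C ⟶ C ⊞ Z) =
      biprod.map g (𝟙 Z) := by
    apply biprod.hom_ext <;> apply biprod.hom_ext' <;> simp
  rw [e1] at step2
  dsimp only at step2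
  rw [e2] at step2
  refine ⟨_, step2, ?_, ?_⟩
  · rw [← S.pull_comp]
    have : (biprod.inl : C ⟶ C ⊞ Z) ≫ biprod.lift biprod.snd biprod.fst =
        biprod.inr := by apply biprod.hom_ext <;> simp
    rw [this, hp1]
  · rw [← S.pull_comp]
    have : (biprod.inr : Z ⟶ C ⊞ Z) ≫ biprod.lift biprod.snd biprod.fst =
        biprod.inl := by apply biprod.hom_ext <;> simp
    rw [this, hp2]

/-- Shear triangle: kernel of `desc u 𝟙`. -/
lemma shear_tri1 {U W : 𝒞} (u : U ⟶ W) :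
    S.IsTriangle (biprod.lift (𝟙 U) (-u)) (biprod.desc u (𝟙 W)) (0 : S.E W U) := by
  have h0 := S.realize_iso _ _ _
    (Iso.mk (biprod.desc (biprod.lift (𝟙 U) (-u)) biprod.inr : U ⊞ W ⟶ U ⊞ W)
      (biprod.desc (biprod.lift (𝟙 U) u) biprod.inr)
      (by apply biprod.hom_ext' <;> apply biprod.hom_ext <;> simp)
      (by apply biprod.hom_ext' <;> apply biprod.hom_ext <;> simp))
    (S.realize_zero U W)
  have e1 : (biprod.inl : U ⟶ U ⊞ W) ≫ biprod.desc (biprod.lift (𝟙 U) (-u)) biprod.inr =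
      biprod.lift (𝟙 U) (-u) := biprod.inl_desc _ _
  have e2 : (biprod.desc (biprod.lift (𝟙 U) u) biprod.inr : U ⊞ W ⟶ U ⊞ W) ≫ biprod.snd =
      biprod.desc u (𝟙 W) := by apply biprod.hom_ext' <;> simp
  rw [e1, e2] at h0
  exact h0

/-- Shear triangle: kernel of `desc 𝟙 u`. -/
lemma shear_tri2 {U W : 𝒞} (u : U ⟶ W) :
    S.IsTriangle (biprod.lift (-u) (𝟙 U)) (biprod.desc (𝟙 W) u) (0 : S.E W U) := by
  have h0 := S.realize_iso _ _ _
    (Iso.mk (biprod.desc (biprod.lift (-u) (𝟙 U)) biprod.inl : U ⊞ W ⟶ W ⊞ U)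
      (biprod.desc biprod.inr (biprod.lift (𝟙 U) u))
      (by apply biprod.hom_ext' <;> apply biprod.hom_ext <;> simp)
      (by apply biprod.hom_ext' <;> apply biprod.hom_ext <;> simp))
    (S.realize_zero U W)
  have e1 : (biprod.inl : U ⟶ U ⊞ W) ≫ biprod.desc (biprod.lift (-u) (𝟙 U)) biprod.inl =
      biprod.lift (-u) (𝟙 U) := biprod.inl_desc _ _
  have e2 : (biprod.desc biprod.inr (biprod.lift (𝟙 U) u) : W ⊞ U ⟶ U ⊞ W) ≫ biprod.snd =
      biprod.desc (𝟙 W) u := by apply biprod.hom_ext' <;> simp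
  rw [e1, e2] at h0
  exact h0
end ExtriangulatedStructure

open CategoryTheory Limits in
/-- under (WIC), a 3×3 diagram whose bottom two rows and three columns are
E-triangles, with `(a,b,c)` a morphism of E-triangles and `y` a retraction, can be completed
by a top row `K → K' → K''` which is an E-triangle, compatibly. -/
theorem stmt3 {𝒞 : Type u} [Category.{v} 𝒞] [Preadditive 𝒞] [HasBinaryBiproducts 𝒞]
    (S : ExtriangulatedStructure.{w} 𝒞) (hWIC : S.WIC)
    {K K' K'' A B X A' B' X' : 𝒞}
    (x : A ⟶ B) (y : B ⟶ X) (δ : S.E X A)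
    (x' : A' ⟶ B') (y' : B' ⟶ X') (δ' : S.E X' A')
    (k : K ⟶ A) (a : A ⟶ A') (κ : S.E A' K)
    (k' : K' ⟶ B) (b : B ⟶ B') (κ' : S.E B' K')
    (k'' : K'' ⟶ X) (c : X ⟶ X') (κ'' : S.E X' K'')
    (hrow1 : S.IsTriangle x y δ) (hrow2 : S.IsTriangle x' y' δ')
    (hcol1 : S.IsTriangle k a κ) (hcol2 : S.IsTriangle k' b κ')
    (hcol3 : S.IsTriangle k'' c κ'')
    (hmor : S.IsTriangleMor x y δ x' y' δ' a b c)
    (hy : ∃ s : X ⟶ B, s ≫ y = 𝟙 X) :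
    ∃ (m : K ⟶ K') (n : K' ⟶ K'') (δ'' : S.E K'' K),
      S.IsTriangle m n δ'' ∧
      S.IsTriangleMor m n δ'' x y δ k k' k'' ∧
      S.IsTriangleMor k a κ k' b κ' m x x' ∧
      S.IsTriangleMor k' b κ' k'' c κ'' n y y' := by
  obtain ⟨s, hs⟩ := hy
  obtain ⟨hxb, hyc, hext⟩ := hmor
  -- Stage 1 : the first row splits
  have hδ0 : δ = 0 := by
    have h1 : S.pull y δ = 0 := S.tri_pull_self hrow1
    calc δ = S.pull (𝟙 X) δ := (S.pull_id δ).symm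
    _ = S.pull (s ≫ y) δ := by rw [hs]
    _ = S.pull s (S.pull y δ) := S.pull_comp s y δ
    _ = 0 := by rw [h1, S.pull_elem_zero]
  have hcδ' : S.pull c δ' = 0 := by rw [← hext, hδ0, S.push_elem_zero]
  -- Stage 2 : octahedron on k ≫ x
  obtain ⟨Eh, h0, h', d, e, δhat, TE1, TE2, hh0, had, hye, hκd, hke0⟩ :=
    S.ET4 k a κ x y δ hcol1 hrow1
  rw [hh0] at TE1
  rw [hδ0, S.push_elem_zero] at TE2
  have hke : S.push k δhat = 0 := by rw [hke0, hδ0, S.pull_elem_zero]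
  obtain ⟨rh, th, hdr, hte, htr, htotE⟩ := S.split_struct TE2
  have hde : d ≫ e = 0 := S.tri_comp_zero TE2
  -- Stage 3 : construction of ph
  have hka : k ≫ a = 0 := S.tri_comp_zero hcol1
  have hkxb : (k ≫ x) ≫ b = 0 := by
    rw [Category.assoc, hxb, ← Category.assoc, hka, Limits.zero_comp]
  obtain ⟨p0, hp0⟩ := S.factor_through_third TE1 b hkxb
  have hxε : x ≫ (h' ≫ (rh ≫ (x' - d ≫ p0))) = 0 := by
    have h1 : x ≫ (h' ≫ rh) = a := by
      rw [← Category.assoc, ← had, Category.assoc, hdr, Category.comp_id]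
    calc x ≫ (h' ≫ (rh ≫ (x' - d ≫ p0)))
        = (x ≫ (h' ≫ rh)) ≫ (x' - d ≫ p0) := by simp only [Category.assoc]
    _ = a ≫ (x' - d ≫ p0) := by rw [h1]
    _ = a ≫ x' - (a ≫ d) ≫ p0 := by rw [Preadditive.comp_sub, Category.assoc]
    _ = a ≫ x' - x ≫ (h' ≫ p0) := by rw [had, Category.assoc]
    _ = 0 := by rw [hp0, hxb, sub_self]
  obtain ⟨ζ, hζ⟩ := S.factor_through_third hrow1 (h' ≫ (rh ≫ (x' - d ≫ p0))) hxε
  set ph : Eh ⟶ B' := p0 + rh ≫ (x' - d ≫ p0) - e ≫ ζ with hpdef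
  have hhp : h' ≫ ph = b := by
    rw [hpdef, Preadditive.comp_sub, Preadditive.comp_add, hp0,
      ← Category.assoc h' e ζ, ← hye, hζ]
    abel
  have hdp : d ≫ ph = x' := by
    rw [hpdef, Preadditive.comp_sub, Preadditive.comp_add,
      ← Category.assoc d rh _, hdr, Category.id_comp, ← Category.assoc d e ζ, hde,
      Limits.zero_comp, sub_zero]
    abel
  have hθ : ph ≫ y' - e ≫ c = 0 := by
    have hd0 : d ≫ (ph ≫ y' - e ≫ c) = 0 := by
      rw [Preadditive.comp_sub, ← Category.assoc, hdp, S.tri_comp_zero hrow2,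
        ← Category.assoc, hde, Limits.zero_comp, sub_zero]
    have hh0' : h' ≫ (ph ≫ y' - e ≫ c) = 0 := by
      rw [Preadditive.comp_sub, ← Category.assoc, hhp, ← Category.assoc, ← hye, hyc,
        sub_self]
    have hθe : ph ≫ y' - e ≫ c = e ≫ (th ≫ (ph ≫ y' - e ≫ c)) := by
      conv_lhs => rw [← Category.id_comp (ph ≫ y' - e ≫ c), ← htotE]
      rw [Preadditive.add_comp, Category.assoc, Category.assoc, hd0, Limits.comp_zero,
        zero_add]
    have hyt : y ≫ (th ≫ (ph ≫ y' - e ≫ c)) = 0 := by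
      rw [hye, Category.assoc, ← hθe]
      exact hh0'
    have ht0 : th ≫ (ph ≫ y' - e ≫ c) = 0 := by
      calc th ≫ (ph ≫ y' - e ≫ c)
          = (s ≫ y) ≫ (th ≫ (ph ≫ y' - e ≫ c)) := by rw [hs, Category.id_comp]
      _ = s ≫ (y ≫ (th ≫ (ph ≫ y' - e ≫ c))) := by rw [Category.assoc]
      _ = 0 := by rw [hyt, Limits.comp_zero]
    rw [hθe, ht0, Limits.comp_zero]
  have hpy : ph ≫ y' = e ≫ c := sub_eq_zero.mp hθ
  have hσy : (th ≫ ph) ≫ y' = c := by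
    rw [Category.assoc, hpy, ← Category.assoc, hte, Category.id_comp]
  have hpdec : ph = rh ≫ x' + e ≫ (th ≫ ph) := by
    conv_lhs => rw [← Category.id_comp ph, ← htotE]
    rw [Preadditive.add_comp, Category.assoc, Category.assoc, hdp]
  -- Stage 4 : the kernel triangle of `desc c y'` with kernel Eh
  obtain ⟨δpad, Tpad, hpr, hpl⟩ := S.pad_triangle hrow2 X
  have hcomp4 : biprod.map (𝟙 X) y' ≫ biprod.desc c (𝟙 X') = biprod.desc c y' := by
    apply biprod.hom_ext' <;> simp
  obtain ⟨W4, i4, p4, m4, n4, ε4, T41, T42, hp4, hiq4, hj4, hpush4, hpull4⟩ :=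
    S.ET4op (biprod.lift (𝟙 X) (-c)) (biprod.desc c (𝟙 X')) 0
      (x' ≫ biprod.inr) (biprod.map (𝟙 X) y') δpad (S.shear_tri1 c) Tpad
  rw [hp4, hcomp4] at T41
  have hξ4 : S.pull (biprod.lift (𝟙 X) (-c)) δpad = 0 := by
    have hlift : biprod.lift (𝟙 X) (-c) = (biprod.inl : X ⟶ X ⊞ X') - c ≫ biprod.inr := by
      apply biprod.hom_ext <;> simp
    rw [hlift, S.pull_hom_sub, hpl, S.pull_comp, hpr, hcδ', zero_sub, neg_zero]
  rw [hξ4] at T42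
  obtain ⟨r4, t4, hr4, ht4, htr4, htot4⟩ := S.split_struct T42
  have hmn4 : m4 ≫ n4 = 0 := S.tri_comp_zero T42
  have hfst4 : i4 ≫ biprod.fst = n4 := by
    have h1 := congrArg (fun q => q ≫ (biprod.fst : X ⊞ X' ⟶ X)) hiq4
    simpa using h1
  have hsnd4 : (i4 ≫ biprod.snd) ≫ y' = -(n4 ≫ c) := by
    have h1 := congrArg (fun q => q ≫ (biprod.snd : X ⊞ X' ⟶ X')) hiq4
    simpa [Category.assoc] using h1
  have hμ : (t4 ≫ (i4 ≫ biprod.snd) + th ≫ ph) ≫ y' = 0 := by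
    rw [Preadditive.add_comp, Category.assoc, hsnd4, hσy, Preadditive.comp_neg,
      ← Category.assoc, ht4, Category.id_comp]
    abel
  obtain ⟨ν, hν⟩ := S.factor_through_first hrow2 _ hμ
  -- Γ and its inverse
  set Γ : Eh ⟶ W4 := (-(rh + e ≫ ν)) ≫ m4 + e ≫ t4 with hΓdef
  set Γ' : W4 ⟶ Eh := -(r4 ≫ d) - n4 ≫ (ν ≫ d) + n4 ≫ th with hΓ'def
  have hm4Γ' : m4 ≫ Γ' = -d := by
    rw [hΓ'def, Preadditive.comp_add, Preadditive.comp_sub, Preadditive.comp_neg,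
      ← Category.assoc, hr4, Category.id_comp, ← Category.assoc, hmn4,
      Limits.zero_comp, sub_zero, ← Category.assoc, hmn4, Limits.zero_comp, add_zero]
  have ht4Γ' : t4 ≫ Γ' = th - ν ≫ d := by
    rw [hΓ'def, Preadditive.comp_add, Preadditive.comp_sub, Preadditive.comp_neg,
      ← Category.assoc, htr4, Limits.zero_comp, neg_zero, zero_sub,
      ← Category.assoc, ht4, Category.id_comp, ← Category.assoc, ht4, Category.id_comp]
    abel
  have hΓΓ' : Γ ≫ Γ' = 𝟙 Eh := by
    calc Γ ≫ Γ' = (-(rh + e ≫ ν)) ≫ (m4 ≫ Γ') + e ≫ (t4 ≫ Γ') := by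
          rw [hΓdef, Preadditive.add_comp, Category.assoc, Category.assoc]
    _ = (rh + e ≫ ν) ≫ d + e ≫ (th - ν ≫ d) := by
          rw [hm4Γ', ht4Γ', Preadditive.comp_neg, Preadditive.neg_comp, neg_neg]
    _ = rh ≫ d + e ≫ th := by
          rw [Preadditive.add_comp, Preadditive.comp_sub, Category.assoc]
          abel
    _ = 𝟙 Eh := htotE
  have hdΓ : d ≫ Γ = -m4 := by
    have h1 : d ≫ (rh + e ≫ ν) = 𝟙 A' := by
      rw [Preadditive.comp_add, hdr, ← Category.assoc, hde, Limits.zero_comp, add_zero]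
    rw [hΓdef, Preadditive.comp_add, ← Category.assoc, ← Category.assoc, hde,
      Limits.zero_comp, add_zero, Preadditive.comp_neg, h1]
    simp
  have htΓ : th ≫ Γ = (-ν) ≫ m4 + t4 := by
    have h2 : th ≫ (rh + e ≫ ν) = ν := by
      rw [Preadditive.comp_add, htr, ← Category.assoc, hte, Category.id_comp, zero_add]
    rw [hΓdef, Preadditive.comp_add, ← Category.assoc, ← Category.assoc, hte,
      Category.id_comp, Preadditive.comp_neg, h2, Preadditive.neg_comp]
  have hΓ'Γ : Γ' ≫ Γ = 𝟙 W4 := by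
    calc Γ' ≫ Γ = -(r4 ≫ (d ≫ Γ)) - n4 ≫ (ν ≫ (d ≫ Γ)) + n4 ≫ (th ≫ Γ) := by
          rw [hΓ'def, Preadditive.add_comp, Preadditive.sub_comp, Preadditive.neg_comp]
          simp only [Category.assoc]
    _ = r4 ≫ m4 + n4 ≫ (ν ≫ m4) + n4 ≫ ((-ν) ≫ m4 + t4) := by
          rw [hdΓ, htΓ]
          simp only [Preadditive.comp_neg, Preadditive.neg_comp, neg_neg]
          abel
    _ = r4 ≫ m4 + n4 ≫ t4 := by
          simp only [Preadditive.comp_add, Preadditive.neg_comp, Preadditive.comp_neg]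
          abel
    _ = 𝟙 W4 := htot4
  have hΓi4 : Γ ≫ i4 = biprod.lift e (-ph) := by
    apply biprod.hom_ext
    · rw [Category.assoc, hfst4, biprod.lift_fst, hΓdef, Preadditive.add_comp,
        Category.assoc, hmn4, Limits.comp_zero, zero_add, Category.assoc, ht4,
        Category.comp_id]
    · rw [Category.assoc, biprod.lift_snd, hΓdef, Preadditive.add_comp,
        Category.assoc, Category.assoc]
      have hm4s : m4 ≫ (i4 ≫ biprod.snd) = x' := by
        rw [← Category.assoc, ← hj4, Category.assoc]; simp
      have ht4s : t4 ≫ (i4 ≫ biprod.snd) = ν ≫ x' - th ≫ ph := by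
        rw [hν]; abel
      rw [hm4s, ht4s, Preadditive.neg_comp, Preadditive.add_comp,
        Preadditive.comp_sub, Category.assoc]
      conv_rhs => rw [hpdec]
      abel
  have T4' := S.twist_left T41 Γ Γ' hΓΓ' hΓ'Γ
  rw [hΓi4] at T4'
  -- Stage 5' : the kernel triangle of `desc c y'` with kernel coming from K''
  obtain ⟨κpad, Tpad3, hql1, hql2⟩ := S.pad_triangle' hcol3 B'
  have hcomp5 : biprod.map c (𝟙 B') ≫ biprod.desc (𝟙 X') y' = biprod.desc c y' := by
    apply biprod.hom_ext' <;> simp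
  obtain ⟨W3, i3, p3, m3, n3, ε3, T31, T32, hp3, hiq3, hj3, hpush3, hpull3⟩ :=
    S.ET4op (biprod.lift (-y') (𝟙 B')) (biprod.desc (𝟙 X') y') 0
      (k'' ≫ biprod.inl) (biprod.map c (𝟙 B')) κpad (S.shear_tri2 y') Tpad3
  rw [hp3, hcomp5] at T31
  have hξ3 : S.pull (biprod.lift (-y') (𝟙 B')) κpad = -(S.pull y' κ'') := by
    have hlift : biprod.lift (-y') (𝟙 B') =
        (biprod.inr : B' ⟶ X' ⊞ B') - y' ≫ biprod.inl := by
      apply biprod.hom_ext <;> simp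
    rw [hlift, S.pull_hom_sub, hql2, S.pull_comp, hql1, zero_sub]
  rw [hξ3] at T32
  have T32' : S.IsTriangle m3 (-n3) (S.pull y' κ'') := by
    have h1 := S.twist_neg T32
    simpa using h1
  have hsnd3 : i3 ≫ biprod.snd = n3 := by
    have h1 := congrArg (fun q => q ≫ (biprod.snd : X' ⊞ B' ⟶ B')) hiq3
    simpa using h1
  have hm3fst : m3 ≫ (i3 ≫ biprod.fst) = k'' := by
    rw [← Category.assoc, ← hj3, Category.assoc]; simp
  -- Stage 6' : identify the two kernels
  obtain ⟨τ, τ', hτ1, hτε, hττ', hτ'τ⟩ := S.cocone_uniq T31 T4'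
  have hτe : τ ≫ e = i3 ≫ biprod.fst := by
    have h1 := congrArg (fun q => q ≫ (biprod.fst : X ⊞ B' ⟶ X)) hτ1
    simpa using h1
  have hτp : τ ≫ ph = -n3 := by
    have h1 := congrArg (fun q => q ≫ (biprod.snd : X ⊞ B' ⟶ B')) hτ1
    simp only [Category.assoc, biprod.lift_snd, Preadditive.comp_neg] at h1
    rw [hsnd3] at h1
    rw [← neg_neg (τ ≫ ph), h1]
  have Tg := S.realize_iso m3 (-n3) (S.pull y' κ'') (Iso.mk τ τ' hττ' hτ'τ) T32'
  have hτ'n : (Iso.mk τ τ' hττ' hτ'τ).inv ≫ (-n3) = ph := by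
    dsimp only
    rw [← hτp, ← Category.assoc, hτ'τ, Category.id_comp]
  rw [hτ'n] at Tg
  dsimp only at Tg
  -- Tg : IsTriangle (m3 ≫ τ) ph (pull y' κ'')
  have hge : (m3 ≫ τ) ≫ e = k'' := by
    rw [Category.assoc, hτe]; exact hm3fst
  -- Stage 7 : final octahedron
  obtain ⟨G, jG, pG, mG, nG, εG, TG1, TG2, hpG, hjq, hj2, hpushG, hpullG⟩ :=
    S.ET4op (m3 ≫ τ) ph (S.pull y' κ'') (k ≫ x) h' δhat Tg TE1
  rw [hpG, hhp] at TG1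
  -- Stage 8 : identify the kernel of b with K'
  obtain ⟨φ, φ', hφk, hφε, hφφ', hφ'φ⟩ := S.cocone_uniq TG1 hcol2
  -- Stage 9 : conclusion
  have hC2i : (mG ≫ φ) ≫ k' = k ≫ x := by
    rw [Category.assoc, hφk, ← hj2]
  have hnk : nG ≫ k'' = jG ≫ y := by
    calc nG ≫ k'' = nG ≫ ((m3 ≫ τ) ≫ e) := by rw [hge]
    _ = (nG ≫ (m3 ≫ τ)) ≫ e := by simp only [Category.assoc]
    _ = (jG ≫ h') ≫ e := by rw [← hjq]
    _ = jG ≫ y := by rw [Category.assoc, ← hye]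
  have hC2ii : (φ' ≫ nG) ≫ k'' = k' ≫ y := by
    rw [Category.assoc, hnk, ← Category.assoc, ← hφk, ← Category.assoc, hφ'φ,
      Category.id_comp]
  have hC2iii : S.push k (S.pull (m3 ≫ τ) δhat) = S.pull k'' δ := by
    rw [hδ0, S.pull_elem_zero, ← S.pull_push, hke, S.pull_elem_zero]
  have hC3iii : S.push (mG ≫ φ) κ = S.pull x' κ' := by
    rw [S.push_comp]
    have h2 : S.push mG κ = S.pull x' εG := by
      rw [← hκd, ← S.pull_push, ← hpullG, ← S.pull_comp, hdp]
    rw [h2, ← S.pull_push, hφε]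
  have hC4iii : S.push (φ' ≫ nG) κ' = S.pull y' κ'' := by
    rw [S.push_comp]
    have h3 : S.push φ' κ' = εG := by
      rw [← hφε, ← S.push_comp, hφφ', S.push_id]
    rw [h3, hpushG]
  refine ⟨mG ≫ φ, φ' ≫ nG, S.pull (m3 ≫ τ) δhat, ?_, ⟨hC2i, hC2ii, hC2iii⟩,
    ⟨hC2i.symm, hxb.symm, hC3iii⟩, ⟨hC2ii.symm, hyc.symm, hC4iii⟩⟩
  have h4 := S.realize_iso mG nG (S.pull (m3 ≫ τ) δhat) (Iso.mk φ φ' hφφ' hφ'φ) TG2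
  simpa using h4
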